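/- For every positive symmetric n×n real matrix H and every k ∈ (0, 1/n], one has (det H)^k ≤ 1 - n·k + k·trace(H). -/

import Mathlib

open Matrix Finset

lemma trace_eq_sum_eigenvalues' {n : ℕ} (H : Matrix (Fin n) (Fin n) ℝ)
    (hH : H.IsHermitian) : H.trace = ∑ i, hH.eigenvalues i := by
  conv_lhs => rw [hH.spectral_theorem]
  rw [Unitary.conjStarAlgAut_apply]
  rw [Matrix.trace_mul_cycle,
    (Matrix.mem_unitaryGroup_iff').mp (hH.eigenvectorUnitary).2, Matrix.one_mul,
    Matrix.trace_diagonal]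
  simp

theorem det_rpow_le_of_posDef {n : ℕ} (hn : 1 ≤ n)
    (H : Matrix (Fin n) (Fin n) ℝ) (hH : H.PosDef) (hsymm : H.IsSymm)
    (k : ℝ) (hk0 : 0 < k) (hk : k ≤ 1 / n) :
    H.det ^ k ≤ 1 - n * k + k * H.trace := by
  have hherm : H.IsHermitian := hH.1
  set μ : Fin n → ℝ := hherm.eigenvalues with hμ
  have hμpos : ∀ i, 0 < μ i := fun i => hH.eigenvalues_pos i
  have hdet : H.det = ∏ i, μ i := by
    simpa using hherm.det_eq_prod_eigenvalues
  have htr : H.trace = ∑ i, μ i := trace_eq_sum_eigenvalues' H hherm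
  have hnpos : (0:ℝ) < n := by exact_mod_cast Nat.lt_of_lt_of_le Nat.zero_lt_one hn
  -- AM-GM
  have hamgm : ∏ i, (μ i) ^ ((1:ℝ)/n) ≤ ∑ i, (1/n : ℝ) * μ i := by
    apply Real.geom_mean_le_arith_mean_weighted
    · intro i _; positivity
    · simp [Finset.sum_const, Finset.card_univ]
      field_simp
    · intro i _; exact (hμpos i).le
  have hprodpos : (0:ℝ) < ∏ i, μ i := Finset.prod_pos fun i _ => hμpos i
  have hg : (∏ i, μ i) ^ ((1:ℝ)/n) ≤ (∑ i, μ i) / n := by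
    calc (∏ i, μ i) ^ ((1:ℝ)/n) = ∏ i, (μ i) ^ ((1:ℝ)/n) := by
          rw [← Real.finset_prod_rpow _ _ (fun i _ => (hμpos i).le)]
      _ ≤ ∑ i, (1/n : ℝ) * μ i := hamgm
      _ = (∑ i, μ i) / n := by rw [← Finset.mul_sum]; ring
  set t : ℝ := (∑ i, μ i) / n with ht
  have htpos : 0 < t := by
    apply div_pos _ hnpos
    exact Finset.sum_pos (fun i _ => hμpos i) (Finset.univ_nonempty_iff.2 ⟨⟨0, hn⟩⟩)
  have hnk1 : n * k ≤ 1 := by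
    rw [div_eq_mul_inv, one_mul] at hk
    calc (n:ℝ) * k ≤ n * (n:ℝ)⁻¹ := by
          exact mul_le_mul_of_nonneg_left hk hnpos.le
      _ = 1 := mul_inv_cancel₀ hnpos.ne'
  have hstep1 : H.det ^ k = ((∏ i, μ i) ^ ((1:ℝ)/n)) ^ ((n:ℝ) * k) := by
    rw [hdet, ← Real.rpow_mul hprodpos.le]
    congr 1; field_simp
  have hstep2 : ((∏ i, μ i) ^ ((1:ℝ)/n)) ^ ((n:ℝ) * k) ≤ t ^ ((n:ℝ) * k) :=
    Real.rpow_le_rpow (Real.rpow_nonneg hprodpos.le _) hg (by positivity)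
  have hbern : t ^ ((n:ℝ) * k) ≤ 1 + (n * k) * (t - 1) := by
    have := rpow_one_add_le_one_add_mul_self (s := t - 1) (by linarith) (p := (n:ℝ)*k)
      (by positivity) hnk1
    simpa using this
  have hfinal : 1 + ((n:ℝ) * k) * (t - 1) = 1 - n * k + k * H.trace := by
    rw [htr, ht]
    field_simp
    ring
  calc H.det ^ k = ((∏ i, μ i) ^ ((1:ℝ)/n)) ^ ((n:ℝ) * k) := hstep1
    _ ≤ t ^ ((n:ℝ) * k) := hstep2
    _ ≤ 1 + (n * k) * (t - 1) := hbern
    _ = 1 - n * k + k * H.trace := hfinal
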